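/- Let (G, I, R, ι, ub) be an instance of anonymous refugee housing with upper-bounds and let h ∈ I be an inhabitant with ub(h) ≥ R. Then (G, I, R, ι, ub) admits an inhabitants-respecting housing of size R if and only if the instance (G \ {ι(h)}, I \ {h}, R, ι, ub) obtained by deleting the vertex ι(h) from G and removing the inhabitant h (with ι and ub restricted to I \ {h}) admits an inhabitants-respecting housing of size R. -/
import Mathlib


/-- An inhabitant `h0` with `ub h0 ≥ R` can be safely
removed: the instance admits an inhabitants-respecting housing of size `R`
iff the instance obtained by deleting the vertex `ι h0` from the topology
and removing `h0` from the inhabitant set does.  The reduced instance lives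
on the induced subgraph `G'` on the vertices other than `ι h0`, with the
assignment `ι'` agreeing with `ι` on `I \ {h0}`. -/
theorem remove_generous_inhabitant
    {V I : Type*} [Fintype V] [DecidableEq V] [Fintype I] [DecidableEq I]
    (G : SimpleGraph V) [DecidableRel G.Adj]
    (ι : I → V) (hinj : Function.Injective ι)
    (ub : I → ℕ) (R : ℕ)
    (hsize : Fintype.card I + R ≤ Fintype.card V)
    (h0 : I) (hub0 : R ≤ ub h0)
    (G' : SimpleGraph {v : V // v ≠ ι h0}) [DecidableRel G'.Adj]
    (hG' : ∀ u v : {v : V // v ≠ ι h0}, G'.Adj u v ↔ G.Adj u.1 v.1)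
    (ι' : ∀ h : I, h ≠ h0 → {v : V // v ≠ ι h0})
    (hι' : ∀ (h : I) (hh : h ≠ h0), (ι' h hh).1 = ι h) :
    (∃ π : Finset V,
        (∀ v ∈ π, ∀ h : I, ι h ≠ v) ∧ π.card = R ∧
        ∀ h : I, (π.filter (fun v => G.Adj (ι h) v)).card ≤ ub h) ↔
    (∃ π' : Finset {v : V // v ≠ ι h0},
        (∀ v ∈ π', ∀ h : I, h ≠ h0 → ι h ≠ v.1) ∧ π'.card = R ∧
        ∀ (h : I) (hh : h ≠ h0),
          (π'.filter (fun v => G'.Adj (ι' h hh) v)).card ≤ ub h) := by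
  constructor
  · rintro ⟨π, hav, hcard, hfil⟩
    refine ⟨π.subtype (· ≠ ι h0), ?_, ?_, ?_⟩
    · intro v hv h hh
      exact hav v.1 (Finset.mem_subtype.mp hv) h
    · rw [Finset.card_subtype, Finset.filter_true_of_mem, hcard]
      intro v hv
      exact (hav v hv h0).symm
    · intro h hh
      have := hfil h
      refine le_trans (le_of_eq ?_) this
      apply Finset.card_bij (fun v _ => v.1)
      · intro v hv
        simp only [Finset.mem_filter, Finset.mem_subtype] at hv ⊢
        exact ⟨hv.1, by rw [← hι' h hh]; exact (hG' _ _).mp hv.2⟩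
      · intro a ha b hb hab
        exact Subtype.ext hab
      · intro b hb
        simp only [Finset.mem_filter] at hb
        refine ⟨⟨b, fun hbe => (hav b hb.1 h0) hbe.symm⟩, ?_, rfl⟩
        simp only [Finset.mem_filter, Finset.mem_subtype]
        exact ⟨hb.1, (hG' _ _).mpr (by rw [hι' h hh]; exact hb.2)⟩
  · rintro ⟨π', hav, hcard, hfil⟩
    refine ⟨π'.map ⟨Subtype.val, Subtype.val_injective⟩, ?_, ?_, ?_⟩
    · intro v hv h
      simp only [Finset.mem_map, Function.Embedding.coeFn_mk] at hv
      obtain ⟨w, hw, rfl⟩ := hv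
      by_cases hh : h = h0
      · subst hh; exact fun he => w.2 he.symm
      · exact hav w hw h hh
    · rw [Finset.card_map, hcard]
    · intro h
      by_cases hh : h = h0
      · subst hh
        refine le_trans (Finset.card_filter_le _ _) ?_
        rw [Finset.card_map, hcard]
        exact hub0
      · have := hfil h hh
        refine le_trans (le_of_eq ?_) this
        rw [Finset.filter_map, Finset.card_map]
        congr 1
        apply Finset.filter_congr
        intro v hv
        simp only [Function.Embedding.coeFn_mk, Function.comp]
        rw [hG', hι' h hh]
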